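/- If r solves the (g,1)-differential equation r''(x) = (1/(2g))·[(g-1)·sin(2r(x)-2a(x)) + sin(2r(x)+2(g-1)·a(x))] (so m = 1, with a(x) = (2/g)·arctan(e^x)) and the limit lim_{x→∞} r(x) = c exists and is finite, then (g-1)·sin(2c - 2π/g) + sin(2c + 2(g-1)π/g) = 0. -/

import Mathlib

open Real Filter Topology

noncomputable def aa (g x : ℝ) : ℝ := (2 / g) * Real.arctan (Real.exp x)

noncomputable def h1 (g x : ℝ) : ℝ :=
  (g - 1) * Real.cos (2 * aa g x) + Real.cos (2 * (g - 1) * aa g x)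

noncomputable def h2 (g x : ℝ) : ℝ :=
  -(g - 1) * Real.sin (2 * aa g x) + Real.sin (2 * (g - 1) * aa g x)

/-- The (g,m)-ODE in the variable x. -/
def IsGMSol (g m : ℝ) (r : ℝ → ℝ) : Prop :=
  ∀ x : ℝ, deriv (deriv r) x =
    (m - 1) * Real.tanh x * deriv r x +
      (m / (2 * g)) * ((g - 1) * Real.sin (2 * r x - 2 * aa g x) +
        Real.sin (2 * r x + 2 * (g - 1) * aa g x))

/-- The Lyapunov function W associated to a solution r. -/
noncomputable def W (g : ℝ) (r : ℝ → ℝ) (x : ℝ) : ℝ :=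
  (1 / 2) * (deriv r x) ^ 2 - (1 / (2 * g)) * h1 g x * (Real.sin (r x)) ^ 2
    - (1 / (2 * g)) * h2 g x * (Real.sin (r x - 3 * Real.pi / 4)) ^ 2

lemma aux_tendsto_atTop_of_deriv_ge {f : ℝ → ℝ} (hf : Differentiable ℝ f) {ε : ℝ}
    (hε : 0 < ε) (h : ∀ᶠ x in atTop, ε ≤ deriv f x) : Tendsto f atTop atTop := by
  obtain ⟨X, hX⟩ := h.exists_forall_of_atTop
  have key : ∀ y, X ≤ y → f X + ε * (y - X) ≤ f y := by
    intro y hy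
    have := (convex_Ici X).mul_sub_le_image_sub_of_le_deriv
      (hf.continuous.continuousOn) (hf.differentiableOn)
      (C := ε) (fun x hx => hX x (le_of_lt (by simpa [interior_Ici] using hx)))
      X Set.self_mem_Ici y hy hy
    linarith
  have hbase : Tendsto (fun y : ℝ => f X + ε * (y - X)) atTop atTop := by
    apply tendsto_atTop_add_const_left
    exact (tendsto_atTop_add_const_right _ (-X) tendsto_id).const_mul_atTop hε
  exact tendsto_atTop_mono' _ (eventually_atTop.2 ⟨X, key⟩) hbase

lemma aux_tendsto_atBot_of_deriv_le {f : ℝ → ℝ} (hf : Differentiable ℝ f) {ε : ℝ}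
    (hε : 0 < ε) (h : ∀ᶠ x in atTop, deriv f x ≤ -ε) : Tendsto f atTop atBot := by
  have hneg : Tendsto (fun x => -f x) atTop atTop := by
    apply aux_tendsto_atTop_of_deriv_ge hf.neg hε
    filter_upwards [h] with x hx
    rw [deriv.neg]
    linarith
  have := tendsto_neg_atTop_atBot.comp hneg
  exact this.congr (fun x => by simp)

lemma aux_limit_zero {f : ℝ → ℝ} (hf : Differentiable ℝ f) (hf' : Differentiable ℝ (deriv f))
    {L c : ℝ} (hL : Tendsto (deriv (deriv f)) atTop (nhds L))
    (hc : Tendsto f atTop (nhds c)) : L = 0 := by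
  by_contra h
  rcases lt_or_gt_of_ne h with hneg | hpos
  · -- L < 0
    have h1 : ∀ᶠ x in atTop, deriv (deriv f) x ≤ -(-(L/2)) := by
      filter_upwards [hL.eventually (eventually_le_nhds (by linarith : L < L/2))] with x hx
      simpa using hx
    have h2 : Tendsto (deriv f) atTop atBot :=
      aux_tendsto_atBot_of_deriv_le hf' (by linarith) h1
    have h3 : ∀ᶠ x in atTop, deriv f x ≤ -1 := h2.eventually (eventually_le_atBot (-1))
    have h4 : Tendsto f atTop atBot :=
      aux_tendsto_atBot_of_deriv_le hf one_pos h3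
    exact not_tendsto_atBot_of_tendsto_nhds hc h4
  · -- L > 0
    have h1 : ∀ᶠ x in atTop, L/2 ≤ deriv (deriv f) x :=
      hL.eventually (eventually_ge_nhds (by linarith : L/2 < L))
    have h2 : Tendsto (deriv f) atTop atTop :=
      aux_tendsto_atTop_of_deriv_ge hf' (by linarith) h1
    have h3 : ∀ᶠ x in atTop, (1:ℝ) ≤ deriv f x := h2.eventually (eventually_ge_atTop 1)
    have h4 : Tendsto f atTop atTop := aux_tendsto_atTop_of_deriv_ge hf one_pos h3
    exact not_tendsto_atTop_of_tendsto_nhds hc h4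

theorem stmt8 (g : ℕ) (hg : 2 ≤ g) (r : ℝ → ℝ) (hr : ContDiff ℝ 2 r)
    (hODE : IsGMSol (g : ℝ) 1 r) (c : ℝ)
    (hc : Filter.Tendsto r Filter.atTop (nhds c)) :
    ((g : ℝ) - 1) * Real.sin (2 * c - 2 * Real.pi / g) +
      Real.sin (2 * c + 2 * ((g : ℝ) - 1) * Real.pi / g) = 0 := by
  have hg2 : (2:ℝ) ≤ (g:ℝ) := by exact_mod_cast hg
  have hg0 : ((g:ℝ)) ≠ 0 := by linarith
  have haa : Tendsto (aa (g:ℝ)) atTop (nhds (Real.pi / g)) := by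
    have h1 : Tendsto (fun x => Real.arctan (Real.exp x)) atTop (nhds (Real.pi / 2)) :=
      (Real.tendsto_arctan_atTop.mono_right nhdsWithin_le_nhds).comp Real.tendsto_exp_atTop
    have h2 := h1.const_mul (2 / (g:ℝ))
    have e : (2 / (g:ℝ)) * (Real.pi / 2) = Real.pi / g := by field_simp
    rw [e] at h2
    exact h2
  set L : ℝ := (1 / (2*(g:ℝ))) * (((g:ℝ)-1) * Real.sin (2*c - 2*(Real.pi/g)) +
      Real.sin (2*c + 2*((g:ℝ)-1)*(Real.pi/g))) with hLdef
  have hrr : Tendsto (fun x => (1/(2*(g:ℝ))) * (((g:ℝ)-1) * Real.sin (2*r x - 2*aa g x) +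
      Real.sin (2*r x + 2*((g:ℝ)-1)*aa g x))) atTop (nhds L) := by
    apply Tendsto.const_mul
    apply Tendsto.add
    · exact Tendsto.const_mul _ (Real.continuous_sin.continuousAt.tendsto.comp
        ((hc.const_mul 2).sub (haa.const_mul 2)))
    · exact Real.continuous_sin.continuousAt.tendsto.comp
        ((hc.const_mul 2).add (haa.const_mul (2*((g:ℝ)-1))))
  have hEq : ∀ x, deriv (deriv r) x = (1/(2*(g:ℝ))) * (((g:ℝ)-1) * Real.sin (2*r x - 2*aa g x) +
      Real.sin (2*r x + 2*((g:ℝ)-1)*aa g x)) := by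
    intro x
    rw [hODE x]
    ring
  have hLim : Tendsto (deriv (deriv r)) atTop (nhds L) := hrr.congr (fun x => (hEq x).symm)
  have hr2 : ContDiff ℝ ((1:ℕ)+1) r := by norm_num at hr ⊢; exact hr
  have hd := contDiff_succ_iff_deriv.mp hr2
  have hdiff : Differentiable ℝ r := hd.1
  have hdiff' : Differentiable ℝ (deriv r) := hd.2.2.differentiable (by norm_num)
  have hL0 : L = 0 := aux_limit_zero hdiff hdiff' hLim hc
  rw [hLdef] at hL0
  have hne : (1 / (2*(g:ℝ))) ≠ 0 := by positivity
  have hsum := (mul_eq_zero.mp hL0).resolve_left hne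
  have e1 : 2 * Real.pi / (g:ℝ) = 2*(Real.pi/g) := by ring
  have e2 : 2 * ((g:ℝ)-1) * Real.pi / g = 2*((g:ℝ)-1)*(Real.pi/g) := by ring
  rw [e1, e2]
  linarith [hsum]
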